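/- Let R be the ring of integers of a number field, k ≥ 2, and suppose for some prime ideal 𝔭 and an ideal 𝔟 and elements a₁,…,aₛ ∈ R we have D(𝔭^k, 𝔟 | a₁,…,aₛ) = N(𝔭^k)/N(𝔭^k + 𝔟), where D(𝔭^k, 𝔟 | a₁,…,aₛ) counts residue classes b mod 𝔭^k with b ≡ aᵢ mod 𝔭^k for some i and b ∈ 𝔭^k + 𝔟. Then for every a ∈ 𝔟 there exists i with a + aᵢ ∈ 𝔭^k; consequently μ^(k)(a+a₁)⋯μ^(k)(a+aₛ) = 0 for all a ∈ 𝔟. -/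
import Mathlib


open scoped NumberField Classical

set_option synthInstance.maxHeartbeats 1000000
set_option maxHeartbeats 1000000

/-- The indicator `μ^(k)(b)` that the principal ideal `(b)` is `k`-free. -/
noncomputable def mukElem {K : Type*} [Field K] [NumberField K] (k : ℕ) (b : 𝓞 K) : ℝ :=
  if ∀ 𝔭 : Ideal (𝓞 K), 𝔭.IsPrime → 𝔭 ≠ ⊥ → ¬ 𝔭 ^ k ∣ Ideal.span {b} then 1 else 0

/-- `D(𝔮, 𝔟 | a₁,…,aₛ)`: the number of residue classes `b` mod `𝔮` such that `b ≡ aᵢ mod 𝔮`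
for some `i` and `b ∈ 𝔮 + 𝔟`. -/
noncomputable def DcountB {K : Type*} [Field K] [NumberField K] {s : ℕ}
    (𝔮 𝔟 : Ideal (𝓞 K)) (a : Fin s → 𝓞 K) : ℕ :=
  (((Finset.image a Finset.univ).filter (fun b => b ∈ 𝔮 + 𝔟)).image
    (Ideal.Quotient.mk 𝔮)).card

/-- If for some prime `𝔭` one has
`D(𝔭^k, 𝔟 | a₁,…,aₛ) = N(𝔭^k)/N(𝔭^k + 𝔟)` (stated multiplied out), then for every `a ∈ 𝔟`
there is an `i` with `a + aᵢ ∈ 𝔭^k`; consequently `μ^(k)(a+a₁)⋯μ^(k)(a+aₛ) = 0` for all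
`a ∈ 𝔟`. -/
theorem stmt13 (K : Type*) [Field K] [NumberField K] (k : ℕ) (hk : 2 ≤ k)
    (𝔭 : Ideal (𝓞 K)) (h𝔭 : 𝔭.IsPrime) (h𝔭' : 𝔭 ≠ ⊥)
    (𝔟 : Ideal (𝓞 K)) (h𝔟 : 𝔟 ≠ ⊥) (s : ℕ) (a : Fin s → 𝓞 K)
    (hD : DcountB (𝔭 ^ k) 𝔟 a * Ideal.absNorm (𝔭 ^ k + 𝔟) = Ideal.absNorm (𝔭 ^ k)) :
    ∀ b ∈ 𝔟, (∃ i, b + a i ∈ 𝔭 ^ k) ∧ ∏ i, mukElem k (b + a i) = 0 := by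
  -- basic nonvanishing facts
  have hpk : (𝔭 ^ k : Ideal (𝓞 K)) ≠ ⊥ := by
    simpa [Submodule.zero_eq_bot] using
      pow_ne_zero k (show 𝔭 ≠ 0 by simpa [Submodule.zero_eq_bot] using h𝔭')
  set J : Ideal (𝓞 K) := 𝔭 ^ k + 𝔟 with hJdef
  have hle : (𝔭 ^ k : Ideal (𝓞 K)) ≤ J := le_sup_left
  have hJ : J ≠ ⊥ := fun h => hpk (eq_bot_iff.2 (h ▸ hle))
  have hNpk : Ideal.absNorm (𝔭 ^ k) ≠ 0 := by
    rw [Ne, Ideal.absNorm_eq_zero_iff]; exact hpk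
  have hNJ : Ideal.absNorm J ≠ 0 := by
    rw [Ne, Ideal.absNorm_eq_zero_iff]; exact hJ
  haveI : Finite (𝓞 K ⧸ (𝔭 ^ k : Ideal (𝓞 K))) := (Ideal.absNorm_ne_zero_iff _).mp hNpk
  haveI : Fintype (𝓞 K ⧸ (𝔭 ^ k : Ideal (𝓞 K))) := Fintype.ofFinite _
  -- the finset of residue classes of `J` mod `𝔭^k`
  set T : Finset (𝓞 K ⧸ (𝔭 ^ k : Ideal (𝓞 K))) :=
    ((Submodule.map (𝔭 ^ k : Ideal (𝓞 K)).mkQ (J : Submodule (𝓞 K) (𝓞 K))) : Set _).toFinset with hTdef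
  have hTcard : T.card * Ideal.absNorm J = Ideal.absNorm (𝔭 ^ k) := by
    have h3 := Submodule.card_quotient_mul_card_quotient J (𝔭 ^ k : Ideal (𝓞 K)) hle
    have h4 : T.card = Nat.card (Submodule.map (𝔭 ^ k : Ideal (𝓞 K)).mkQ (J : Submodule (𝓞 K) (𝓞 K))) := by
      rw [hTdef, Set.toFinset_card, Nat.card_eq_fintype_card]
      exact Fintype.card_congr (Equiv.refl _)
    rw [h4, Ideal.absNorm_apply, Ideal.absNorm_apply, Submodule.cardQuot_apply,
      Submodule.cardQuot_apply]
    exact h3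
  -- the counted set is contained in `T`
  set D : Finset (𝓞 K ⧸ (𝔭 ^ k : Ideal (𝓞 K))) :=
    ((Finset.image a Finset.univ).filter (fun b => b ∈ 𝔭 ^ k + 𝔟)).image
      (Ideal.Quotient.mk (𝔭 ^ k)) with hDdef
  have hsub : D ⊆ T := by
    intro x hx
    rw [hDdef, Finset.mem_image] at hx
    obtain ⟨y, hy, rfl⟩ := hx
    rw [Finset.mem_filter] at hy
    rw [hTdef, Set.mem_toFinset]
    exact ⟨y, hy.2, rfl⟩
  have hcard : T.card ≤ D.card := by
    have h1 : D.card * Ideal.absNorm J = T.card * Ideal.absNorm J := by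
      rw [hTcard]; exact hD
    exact le_of_eq (Nat.eq_of_mul_eq_mul_right (Nat.pos_of_ne_zero hNJ) h1).symm
  have hDT : D = T := Finset.eq_of_subset_of_card_le hsub hcard
  intro b hb
  -- `-b ∈ J`, so its class lies in `T = D`, giving the desired `i`
  have hbJ : (-b : 𝓞 K) ∈ J := (le_sup_right : 𝔟 ≤ J) (neg_mem hb)
  have hmem : Ideal.Quotient.mk (𝔭 ^ k) (-b) ∈ D := by
    rw [hDT, hTdef, Set.mem_toFinset]
    exact ⟨-b, hbJ, rfl⟩
  rw [hDdef, Finset.mem_image] at hmem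
  obtain ⟨y, hy, hyeq⟩ := hmem
  rw [Finset.mem_filter, Finset.mem_image] at hy
  obtain ⟨⟨i, -, rfl⟩, -⟩ := hy
  have hi : b + a i ∈ 𝔭 ^ k := by
    have := (Ideal.Quotient.eq (I := 𝔭 ^ k)).mp hyeq
    simpa [add_comm] using this
  refine ⟨⟨i, hi⟩, ?_⟩
  apply Finset.prod_eq_zero (Finset.mem_univ i)
  rw [mukElem, if_neg]
  push_neg
  refine ⟨𝔭, h𝔭, h𝔭', ?_⟩
  rw [Ideal.dvd_iff_le, Ideal.span_le, Set.singleton_subset_iff]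
  exact hi
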